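/- Let n ≥ 2, let Ω be an open subset of ℝⁿ, and let 0 < δ ≤ n. Then there exists a constant c₂ depending only on n such that ∫_Ω |f(x)| dx ≤ (c₂/δ) ( ∫_Ω |f(x)|^{δ/n} dH^δ_∞ )^{n/δ} for all Lebesgue measurable functions f : Ω → [−∞, ∞], where the left-hand side is a Lebesgue integral. -/

import Mathlib

open MeasureTheory Metric Set Bornology
open scoped ENNReal NNReal

/-- The `δ`-dimensional Hausdorff content of a set `E ⊆ ℝⁿ`, defined as the infimum of
`∑ᵢ rᵢ^δ` over all countable coverings of `E` by open balls `B(xᵢ, rᵢ)`. -/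
noncomputable def hContent (n : ℕ) (δ : ℝ) (E : Set (EuclideanSpace ℝ (Fin n))) : ℝ≥0∞ :=
  ⨅ (x : ℕ → EuclideanSpace ℝ (Fin n)) (r : ℕ → ℝ≥0)
    (_ : E ⊆ ⋃ i, Metric.ball (x i) (r i)), ∑' i, (r i : ℝ≥0∞) ^ δ

/-- The `δ`-dimensional Hausdorff measure of `E ⊆ ℝⁿ`, obtained from coverings by open balls of
radii at most `ρ`, in the limit `ρ → 0⁺` (equivalently: the supremum over `ρ > 0`, since the
infima increase as `ρ` decreases). -/
noncomputable def hMeasure (n : ℕ) (δ : ℝ) (E : Set (EuclideanSpace ℝ (Fin n))) : ℝ≥0∞ :=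
  ⨆ (ρ : ℝ≥0) (_ : 0 < ρ),
    ⨅ (x : ℕ → EuclideanSpace ℝ (Fin n)) (r : ℕ → ℝ≥0)
      (_ : E ⊆ ⋃ i, Metric.ball (x i) (r i)) (_ : ∀ i, r i ≤ ρ), ∑' i, (r i : ℝ≥0∞) ^ δ

/-- The Choquet integral `∫_Ω f dH^δ_∞ = ∫₀^∞ H^δ_∞({x ∈ Ω : f x > t}) dt` of a
(nonnegative) real-valued function with respect to the Hausdorff content. -/
noncomputable def choquet (n : ℕ) (δ : ℝ) (Ω : Set (EuclideanSpace ℝ (Fin n)))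
    (f : EuclideanSpace ℝ (Fin n) → ℝ) : ℝ≥0∞ :=
  ∫⁻ t in Set.Ioi (0 : ℝ), hContent n δ {x ∈ Ω | t < f x}

/-- The Choquet integral of an `[0,∞]`-valued function with respect to the Hausdorff content. -/
noncomputable def echoquet (n : ℕ) (δ : ℝ) (Ω : Set (EuclideanSpace ℝ (Fin n)))
    (f : EuclideanSpace ℝ (Fin n) → ℝ≥0∞) : ℝ≥0∞ :=
  ∫⁻ t in Set.Ioi (0 : ℝ), hContent n δ {x ∈ Ω | ENNReal.ofReal t < f x}

/-- The centered fractional Hardy–Littlewood maximal function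
`M_κ f (x) = sup_{r>0} r^{κ-n} ∫_{B(x,r)} |f|`. -/
noncomputable def fracMaximal (n : ℕ) (κ : ℝ) (f : EuclideanSpace ℝ (Fin n) → ℝ)
    (x : EuclideanSpace ℝ (Fin n)) : ℝ≥0∞ :=
  ⨆ (r : ℝ) (_ : 0 < r),
    ENNReal.ofReal (r ^ (κ - n)) * ∫⁻ y in Metric.ball x r, ENNReal.ofReal |f y|

/-- The Riesz potential of order `1`: `I₁ f (x) = ∫_{ℝⁿ} |f y| / |x-y|^{n-1} dy`. -/
noncomputable def rieszPot (n : ℕ) (f : EuclideanSpace ℝ (Fin n) → ℝ)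
    (x : EuclideanSpace ℝ (Fin n)) : ℝ≥0∞ :=
  ∫⁻ y, ENNReal.ofReal |f y| / edist x y ^ ((n : ℝ) - 1)

/-- `Ω` is an `(α, β)`-John domain with John center `x₀`: every `x ∈ Ω` can be joined to `x₀`
by a rectifiable curve `γ : [0, L] → Ω` parametrized by arclength (hence `1`-Lipschitz) with
`γ 0 = x`, `γ L = x₀`, `L ≤ β` and `dist (γ t, ∂Ω) ≥ (α/β) t`. -/
def IsJohnDomainWithCenter (n : ℕ) (α β : ℝ) (Ω : Set (EuclideanSpace ℝ (Fin n)))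
    (x₀ : EuclideanSpace ℝ (Fin n)) : Prop :=
  x₀ ∈ Ω ∧ ∀ x ∈ Ω, ∃ L : ℝ, 0 ≤ L ∧ L ≤ β ∧ ∃ γ : ℝ → EuclideanSpace ℝ (Fin n),
    γ 0 = x ∧ γ L = x₀ ∧ (∀ t ∈ Set.Icc 0 L, γ t ∈ Ω) ∧
    LipschitzOnWith 1 γ (Set.Icc 0 L) ∧
    ∀ t ∈ Set.Icc 0 L, α / β * t ≤ Metric.infDist (γ t) (frontier Ω)

/-- `Ω` is an `(α, β)`-John domain. -/
def IsJohnDomain (n : ℕ) (α β : ℝ) (Ω : Set (EuclideanSpace ℝ (Fin n))) : Prop :=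
  ∃ x₀, IsJohnDomainWithCenter n α β Ω x₀

section Aux

/-- `∑ aᵢ^p ≤ (∑ aᵢ)^p` in `ℝ≥0∞` for `p ≥ 1`. -/
lemma aux_tsum_rpow_le (a : ℕ → ℝ≥0∞) {p : ℝ} (hp : 1 ≤ p) :
    ∑' i, a i ^ p ≤ (∑' i, a i) ^ p := by
  have hp0 : 0 < p := lt_of_lt_of_le one_pos hp
  rcases eq_or_ne (∑' i, a i) 0 with h0 | h0
  · have ha : ∀ i, a i = 0 := fun i =>
      le_antisymm (h0 ▸ ENNReal.le_tsum i) zero_le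
    simp [ha, ENNReal.zero_rpow_of_pos hp0]
  rcases eq_or_ne (∑' i, a i) ∞ with htop | htop
  · rw [htop, ENNReal.top_rpow_of_pos hp0]; exact le_top
  calc ∑' i, a i ^ p ≤ ∑' i, (∑' j, a j) ^ (p - 1) * a i := by
        refine ENNReal.tsum_le_tsum fun i => ?_
        have h1 : a i ^ p = a i ^ (p - 1) * a i := by
          have h2 := ENNReal.rpow_add_of_nonneg (x := a i) (p - 1) 1
            (by linarith) zero_le_one
          rw [sub_add_cancel, ENNReal.rpow_one] at h2
          exact h2
        rw [h1]
        exact mul_le_mul' (ENNReal.rpow_le_rpow (ENNReal.le_tsum i) (by linarith)) le_rfl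
    _ = (∑' j, a j) ^ (p - 1) * ∑' i, a i := ENNReal.tsum_mul_left
    _ = (∑' i, a i) ^ p := by
        have h2 := ENNReal.rpow_add (x := ∑' i, a i) (p - 1) 1 h0 htop
        rw [sub_add_cancel, ENNReal.rpow_one] at h2
        exact h2.symm

/-- Monotonicity of the Hausdorff content. -/
lemma aux_hContent_mono (n : ℕ) (δ : ℝ) {E F : Set (EuclideanSpace ℝ (Fin n))}
    (hEF : E ⊆ F) : hContent n δ E ≤ hContent n δ F := by
  refine le_iInf fun x => le_iInf fun r => le_iInf fun hc => ?_
  exact iInf_le_of_le x (iInf_le_of_le r (iInf_le_of_le (hEF.trans hc) le_rfl))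

/-- The Lebesgue measure of a set is controlled by a power of its Hausdorff content. -/
lemma aux_vol_le_hContent (n : ℕ) (hn : 0 < n) {δ : ℝ} (hδ : 0 < δ) (hδn : δ ≤ (n : ℝ))
    (E : Set (EuclideanSpace ℝ (Fin n))) :
    volume E ≤ volume (ball (0 : EuclideanSpace ℝ (Fin n)) 1) *
      hContent n δ E ^ ((n : ℝ) / δ) := by
  haveI : Nonempty (Fin n) := Fin.pos_iff_nonempty.mp hn
  set V := volume (ball (0 : EuclideanSpace ℝ (Fin n)) 1) with hVdef
  have hn0 : (0 : ℝ) < n := by exact_mod_cast hn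
  have hp0 : 0 < (n : ℝ) / δ := div_pos hn0 hδ
  have hp1 : 1 ≤ (n : ℝ) / δ := (one_le_div hδ).2 hδn
  have hV0 : V ≠ 0 := (measure_ball_pos _ _ one_pos).ne'
  have hVt : V ≠ ∞ := measure_ball_lt_top.ne
  have key : ∀ (x : ℕ → EuclideanSpace ℝ (Fin n)) (r : ℕ → ℝ≥0),
      E ⊆ ⋃ i, ball (x i) (r i) →
      volume E ≤ V * (∑' i, (r i : ℝ≥0∞) ^ δ) ^ ((n : ℝ) / δ) := by
    intro x r hcover
    calc volume E ≤ ∑' i, volume (ball (x i) (r i : ℝ)) :=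
          le_trans (measure_mono hcover) (measure_iUnion_le _)
      _ = ∑' i, ((r i : ℝ≥0∞) ^ δ) ^ ((n : ℝ) / δ) * V := by
          refine tsum_congr fun i => ?_
          rw [Measure.addHaar_ball _ _ (r i).coe_nonneg, finrank_euclideanSpace_fin]
          congr 1
          have hmul : δ * ((n : ℝ) / δ) = (n : ℝ) := by field_simp
          rw [← ENNReal.rpow_mul, hmul, ENNReal.rpow_natCast, ← ENNReal.coe_pow,
            ← ENNReal.ofReal_coe_nnreal]
          norm_cast
      _ = V * ∑' i, ((r i : ℝ≥0∞) ^ δ) ^ ((n : ℝ) / δ) := by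
          rw [ENNReal.tsum_mul_right, mul_comm]
      _ ≤ V * (∑' i, (r i : ℝ≥0∞) ^ δ) ^ ((n : ℝ) / δ) :=
          mul_le_mul_right (aux_tsum_rpow_le _ hp1) V
  have hle : (volume E / V) ^ (δ / (n : ℝ)) ≤ hContent n δ E := by
    refine le_iInf fun x => le_iInf fun r => le_iInf fun hcover => ?_
    have h2 := key x r hcover
    have h3 : volume E / V ≤ (∑' i, (r i : ℝ≥0∞) ^ δ) ^ ((n : ℝ) / δ) := by
      rw [ENNReal.div_le_iff hV0 hVt, mul_comm]
      exact h2
    calc (volume E / V) ^ (δ / (n : ℝ))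
        ≤ (((∑' i, (r i : ℝ≥0∞) ^ δ) ^ ((n : ℝ) / δ))) ^ (δ / (n : ℝ)) :=
          ENNReal.rpow_le_rpow h3 (le_of_lt (div_pos hδ hn0))
      _ = ∑' i, (r i : ℝ≥0∞) ^ δ := by
          rw [← ENNReal.rpow_mul]
          have : (n : ℝ) / δ * (δ / (n : ℝ)) = 1 := by field_simp
          rw [this, ENNReal.rpow_one]
  have h4 := ENNReal.rpow_le_rpow hle (le_of_lt hp0)
  rw [← ENNReal.rpow_mul] at h4
  have h5 : δ / (n : ℝ) * ((n : ℝ) / δ) = 1 := by field_simp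
  rw [h5, ENNReal.rpow_one] at h4
  calc volume E = V * (volume E / V) := (ENNReal.mul_div_cancel hV0 hVt).symm
    _ ≤ V * hContent n δ E ^ ((n : ℝ) / δ) := mul_le_mul_right h4 V

/-- Layercake formula for `ℝ≥0∞`-valued functions. -/
lemma aux_layercake {α : Type*} [MeasurableSpace α] (μ : Measure α) [SigmaFinite μ]
    {G : α → ℝ≥0∞} (hG : Measurable G) :
    ∫⁻ x, G x ∂μ = ∫⁻ t in Set.Ioi (0 : ℝ), μ {x | ENNReal.ofReal t < G x} := by
  set S : Set (α × ℝ) := {p : α × ℝ | 0 < p.2 ∧ ENNReal.ofReal p.2 < G p.1} with hSdef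
  have hS : MeasurableSet S := by
    have h1 : S = (Prod.snd ⁻¹' Set.Ioi (0 : ℝ)) ∩
        {p : α × ℝ | ENNReal.ofReal p.2 < G p.1} := rfl
    rw [h1]
    exact (measurable_snd measurableSet_Ioi).inter
      (measurableSet_lt (ENNReal.measurable_ofReal.comp measurable_snd)
        (hG.comp measurable_fst))
  have hFmeas : Measurable fun p : α × ℝ => S.indicator (fun _ => (1 : ℝ≥0∞)) p :=
    measurable_const.indicator hS
  have swap := lintegral_lintegral_swap (μ := μ) (ν := (volume : Measure ℝ))
    (f := fun x t => S.indicator (fun _ => (1 : ℝ≥0∞)) (x, t)) hFmeas.aemeasurable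
  have inner : ∀ x, (∫⁻ t, S.indicator (fun _ => (1 : ℝ≥0∞)) (x, t)) = G x := by
    intro x
    have hxs : (fun t : ℝ => S.indicator (fun _ => (1 : ℝ≥0∞)) (x, t))
        = ({t : ℝ | 0 < t ∧ ENNReal.ofReal t < G x}).indicator (fun _ => (1 : ℝ≥0∞)) := rfl
    have hmeas : MeasurableSet {t : ℝ | 0 < t ∧ ENNReal.ofReal t < G x} := by
      have : {t : ℝ | 0 < t ∧ ENNReal.ofReal t < G x}
          = Set.Ioi (0 : ℝ) ∩ (fun t : ℝ => ENNReal.ofReal t) ⁻¹' Set.Iio (G x) := rfl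
      rw [this]
      exact measurableSet_Ioi.inter (ENNReal.measurable_ofReal measurableSet_Iio)
    rw [hxs]
    refine (lintegral_indicator_one hmeas).trans ?_
    rcases eq_or_ne (G x) ∞ with htop | htop
    · have h2 : {t : ℝ | 0 < t ∧ ENNReal.ofReal t < G x} = Set.Ioi (0 : ℝ) := by
        ext t; simp [htop]
      rw [h2, Real.volume_Ioi, htop]
    · have h2 : {t : ℝ | 0 < t ∧ ENNReal.ofReal t < G x} = Set.Ioo 0 ((G x).toReal) := by
        ext t
        simp only [Set.mem_setOf_eq, Set.mem_Ioo]
        constructor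
        · rintro ⟨ht, hlt⟩
          exact ⟨ht, (ENNReal.ofReal_lt_iff_lt_toReal ht.le htop).1 hlt⟩
        · rintro ⟨ht, hlt⟩
          exact ⟨ht, (ENNReal.ofReal_lt_iff_lt_toReal ht.le htop).2 hlt⟩
      rw [h2, Real.volume_Ioo, sub_zero, ENNReal.ofReal_toReal htop]
  have outer : ∀ t : ℝ, (∫⁻ x, S.indicator (fun _ => (1 : ℝ≥0∞)) (x, t) ∂μ)
      = (Set.Ioi (0 : ℝ)).indicator (fun t => μ {x | ENNReal.ofReal t < G x}) t := by
    intro t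
    by_cases ht : 0 < t
    · have hxs : (fun x => S.indicator (fun _ => (1 : ℝ≥0∞)) (x, t))
          = ({x | ENNReal.ofReal t < G x}).indicator (fun _ => (1 : ℝ≥0∞)) := by
        funext x
        by_cases hx : ENNReal.ofReal t < G x <;>
          simp [hSdef, Set.indicator_apply, Set.mem_setOf_eq, ht, hx]
      rw [hxs]
      exact (lintegral_indicator_one (hG measurableSet_Ioi)).trans
        (Set.indicator_of_mem (Set.mem_Ioi.2 ht)
          (fun t => μ {x | ENNReal.ofReal t < G x})).symm
    · have hxs : (fun x => S.indicator (fun _ => (1 : ℝ≥0∞)) (x, t)) = fun _ => 0 := by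
        funext x
        simp [hSdef, Set.indicator_apply, Set.mem_setOf_eq, ht]
      rw [hxs, lintegral_zero, Set.indicator_of_notMem (by simpa using ht)]
  calc ∫⁻ x, G x ∂μ = ∫⁻ x, ∫⁻ t, S.indicator (fun _ => (1 : ℝ≥0∞)) (x, t) ∂volume ∂μ := by
        refine lintegral_congr fun x => (inner x).symm
    _ = ∫⁻ t, ∫⁻ x, S.indicator (fun _ => (1 : ℝ≥0∞)) (x, t) ∂μ := swap
    _ = ∫⁻ t, (Set.Ioi (0 : ℝ)).indicator (fun t => μ {x | ENNReal.ofReal t < G x}) t := by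
        refine lintegral_congr fun t => outer t
    _ = ∫⁻ t in Set.Ioi (0 : ℝ), μ {x | ENNReal.ofReal t < G x} :=
        lintegral_indicator measurableSet_Ioi _

/-- 1D change of variables for the Lebesgue integral. -/
lemma aux_lintegral_image {s : Set ℝ} {f f' : ℝ → ℝ} (hs : MeasurableSet s)
    (hf' : ∀ x ∈ s, HasDerivWithinAt f (f' x) s x) (hf : Set.InjOn f s) (g : ℝ → ℝ≥0∞) :
    ∫⁻ x in f '' s, g x = ∫⁻ x in s, ENNReal.ofReal |f' x| * g (f x) := by
  simpa only [ContinuousLinearMap.det_toSpanSingleton] using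
    MeasureTheory.lintegral_image_eq_lintegral_abs_det_fderiv_mul volume hs
      (fun x hx => (hf' x hx).hasFDerivWithinAt) hf g

end Aux

/-- Lemma: the Lebesgue integral is dominated by a power of the Choquet
integral w.r.t. the `δ`-dimensional Hausdorff content. There is `c₂ = c₂(n) > 0` such that for
every `0 < δ ≤ n`, every open `Ω ⊆ ℝⁿ` and every measurable `f : Ω → [-∞, ∞]`,
`∫_Ω |f| dx ≤ (c₂/δ) (∫_Ω |f|^{δ/n} dH^δ_∞)^{n/δ}`. -/
theorem lebesgue_le_choquet_power (n : ℕ) (hn : 2 ≤ n) :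
    ∃ c₂ : ℝ≥0, 0 < c₂ ∧
      ∀ δ : ℝ, 0 < δ → δ ≤ (n : ℝ) →
        ∀ Ω : Set (EuclideanSpace ℝ (Fin n)), IsOpen Ω →
          ∀ f : EuclideanSpace ℝ (Fin n) → EReal, Measurable f →
            ∫⁻ x in Ω, (f x).abs
              ≤ (c₂ : ℝ≥0∞) / ENNReal.ofReal δ *
                  (echoquet n δ Ω fun x => (f x).abs ^ (δ / n)) ^ ((n : ℝ) / δ) := by
  have hn0 : 0 < n := by omega
  haveI : Nonempty (Fin n) := Fin.pos_iff_nonempty.mp hn0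
  set V := volume (ball (0 : EuclideanSpace ℝ (Fin n)) 1) with hVdef
  have hV0 : V ≠ 0 := (measure_ball_pos _ _ one_pos).ne'
  have hVt : V ≠ ∞ := measure_ball_lt_top.ne
  have hc0 : (0 : ℝ≥0) < V.toNNReal * n :=
    mul_pos (ENNReal.toNNReal_pos hV0 hVt) (by exact_mod_cast hn0)
  refine ⟨V.toNNReal * n, hc0, ?_⟩
  intro δ hδ hδn Ω hΩ f hf
  have hnR : (0 : ℝ) < n := by exact_mod_cast hn0
  have hp0 : 0 < (n : ℝ) / δ := div_pos hnR hδ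
  have hp1 : 1 ≤ (n : ℝ) / δ := (one_le_div hδ).2 hδn
  have hq0 : 0 < δ / (n : ℝ) := div_pos hδ hnR
  have hpq : (n : ℝ) / δ * (δ / (n : ℝ)) = 1 := by field_simp
  set p : ℝ := (n : ℝ) / δ with hpdef
  set q : ℝ := δ / (n : ℝ) with hqdef
  set G : EuclideanSpace ℝ (Fin n) → ℝ≥0∞ := fun x => (f x).abs with hGdef
  have hG : Measurable G := by
    have h1 : Measurable EReal.abs := EReal.measurable_of_measurable_real (by
      simp only [EReal.abs_def]
      exact ENNReal.measurable_ofReal.comp measurable_id.abs)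
    exact h1.comp hf
  set g : EuclideanSpace ℝ (Fin n) → ℝ≥0∞ := fun x => G x ^ q with hgdef
  set H : ℝ → ℝ≥0∞ := fun t => hContent n δ {x ∈ Ω | ENNReal.ofReal t < g x} with hHdef
  set A : ℝ≥0∞ := ∫⁻ t in Set.Ioi (0 : ℝ), H t with hAdef
  have hAe : echoquet n δ Ω g = A := rfl
  have hgoalA : (echoquet n δ Ω fun x => (f x).abs ^ (δ / (n : ℝ))) = A := hAe
  rw [hgoalA]
  -- the constant, as an extended real
  have hcoe : ((V.toNNReal * (n : ℝ≥0) : ℝ≥0) : ℝ≥0∞) / ENNReal.ofReal δ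
      = V * ENNReal.ofReal p := by
    rw [ENNReal.coe_mul, ENNReal.coe_toNNReal hVt, hpdef,
      ENNReal.ofReal_div_of_pos hδ, ENNReal.ofReal_natCast, mul_div_assoc]
    norm_cast
  rw [hcoe]
  -- trivial case : infinite Choquet integral
  rcases eq_or_ne A ∞ with hAtop | hAtop
  · rw [hAtop, ENNReal.top_rpow_of_pos hp0, ENNReal.mul_top]
    · exact le_top
    · refine mul_ne_zero hV0 ?_
      simp [ENNReal.ofReal_eq_zero, not_le, hp0]
  -- antitonicity of H and the key estimate u * H u ≤ A
  have hHanti : ∀ {t s : ℝ}, t ≤ s → H s ≤ H t := by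
    intro t s hts
    refine aux_hContent_mono n δ fun x hx => ?_
    exact ⟨hx.1, lt_of_le_of_lt (ENNReal.ofReal_le_ofReal hts) hx.2⟩
  have hkey : ∀ u : ℝ, 0 < u → ENNReal.ofReal u * H u ≤ A := by
    intro u hu
    calc ENNReal.ofReal u * H u = H u * volume (Set.Ioo (0 : ℝ) u) := by
          rw [Real.volume_Ioo, sub_zero, mul_comm]
      _ = ∫⁻ _ in Set.Ioo (0 : ℝ) u, H u := (setLIntegral_const _ _).symm
      _ ≤ ∫⁻ t in Set.Ioo (0 : ℝ) u, H t := by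
          refine lintegral_mono_ae ((ae_restrict_iff' measurableSet_Ioo).2
            (Filter.Eventually.of_forall fun t ht => ?_))
          exact hHanti ht.2.le
      _ ≤ ∫⁻ t in Set.Ioi (0 : ℝ), H t :=
          lintegral_mono_set fun t ht => ht.1
  -- layercake
  have hlayer : ∫⁻ x in Ω, G x
      = ∫⁻ t in Set.Ioi (0 : ℝ), (volume.restrict Ω) {x | ENNReal.ofReal t < G x} :=
    aux_layercake (volume.restrict Ω) hG
  -- pointwise domination of the measure of superlevel sets
  have hstep2 : ∀ t ∈ Set.Ioi (0 : ℝ),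
      (volume.restrict Ω) {x | ENNReal.ofReal t < G x} ≤ V * H (t ^ q) ^ p := by
    intro t ht
    rw [show {x | ENNReal.ofReal t < G x} = G ⁻¹' Set.Ioi (ENNReal.ofReal t) from rfl,
      Measure.restrict_apply (hG measurableSet_Ioi)]
    have hset : G ⁻¹' Set.Ioi (ENNReal.ofReal t) ∩ Ω
        = {x ∈ Ω | ENNReal.ofReal (t ^ q) < g x} := by
      ext x
      simp only [Set.mem_inter_iff, Set.mem_preimage, Set.mem_Ioi, Set.mem_setOf_eq, hgdef]
      rw [← ENNReal.ofReal_rpow_of_pos ht, ENNReal.rpow_lt_rpow_iff hq0, and_comm]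
    rw [hset]
    exact aux_vol_le_hContent n hn0 hδ hδn _
  -- first inequality
  have hineq1 : ∫⁻ x in Ω, G x ≤ V * ∫⁻ t in Set.Ioi (0 : ℝ), H (t ^ q) ^ p := by
    rw [hlayer, ← lintegral_const_mul' V _ hVt]
    refine lintegral_mono_ae ((ae_restrict_iff' measurableSet_Ioi).2
      (Filter.Eventually.of_forall fun t ht => hstep2 t ht))
  -- change of variables t = u ^ p
  have himg : (fun u : ℝ => u ^ p) '' Set.Ioi 0 = Set.Ioi (0 : ℝ) := by
    ext s
    constructor
    · rintro ⟨u, hu, rfl⟩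
      exact Real.rpow_pos_of_pos hu p
    · intro hs
      refine ⟨s ^ (1 / p), Real.rpow_pos_of_pos hs _, ?_⟩
      show (s ^ (1 / p)) ^ p = s
      rw [← Real.rpow_mul (le_of_lt hs), one_div_mul_cancel hp0.ne', Real.rpow_one]
  have hderiv : ∀ u ∈ Set.Ioi (0 : ℝ),
      HasDerivWithinAt (fun u : ℝ => u ^ p) (p * u ^ (p - 1)) (Set.Ioi 0) u :=
    fun u hu => (Real.hasDerivAt_rpow_const (Or.inl (ne_of_gt hu))).hasDerivWithinAt
  have hinj : Set.InjOn (fun u : ℝ => u ^ p) (Set.Ioi 0) := by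
    intro a ha b hb hab
    by_contra hne
    rcases lt_or_gt_of_ne hne with h | h
    · exact absurd hab (ne_of_lt (Real.rpow_lt_rpow (le_of_lt ha) h hp0))
    · exact absurd hab.symm (ne_of_lt (Real.rpow_lt_rpow (le_of_lt hb) h hp0))
  have hcov : ∫⁻ t in Set.Ioi (0 : ℝ), H (t ^ q) ^ p
      = ∫⁻ u in Set.Ioi (0 : ℝ),
          ENNReal.ofReal |p * u ^ (p - 1)| * H ((u ^ p) ^ q) ^ p := by
    conv_lhs => rw [← himg]
    exact aux_lintegral_image measurableSet_Ioi hderiv hinj (fun t => H (t ^ q) ^ p)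
  -- pointwise bound after the substitution
  have hbound : ∀ u ∈ Set.Ioi (0 : ℝ),
      ENNReal.ofReal |p * u ^ (p - 1)| * H ((u ^ p) ^ q) ^ p
        ≤ ENNReal.ofReal p * A ^ (p - 1) * H u := by
    intro u hu
    have hu0 : (0 : ℝ) < u := hu
    have hup : (u ^ p) ^ q = u := by
      rw [← Real.rpow_mul hu0.le, hpq, Real.rpow_one]
    rw [hup]
    have habs : |p * u ^ (p - 1)| = p * u ^ (p - 1) :=
      abs_of_nonneg (mul_nonneg hp0.le (Real.rpow_nonneg hu0.le _))
    rw [habs, ENNReal.ofReal_mul hp0.le, ← ENNReal.ofReal_rpow_of_pos hu0]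
    have hHsplit : H u ^ p = H u ^ (p - 1) * H u := by
      have h2 := ENNReal.rpow_add_of_nonneg (x := H u) (p - 1) 1
        (by linarith) zero_le_one
      rw [sub_add_cancel, ENNReal.rpow_one] at h2
      exact h2
    rw [hHsplit]
    calc ENNReal.ofReal p * ENNReal.ofReal u ^ (p - 1) * (H u ^ (p - 1) * H u)
        = ENNReal.ofReal p * ((ENNReal.ofReal u * H u) ^ (p - 1)) * H u := by
          rw [ENNReal.mul_rpow_of_nonneg _ _ (by linarith : (0:ℝ) ≤ p - 1)]
          ring
      _ ≤ ENNReal.ofReal p * A ^ (p - 1) * H u := by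
          refine mul_le_mul' (mul_le_mul' le_rfl ?_) le_rfl
          exact ENNReal.rpow_le_rpow (hkey u hu0) (by linarith)
  -- putting everything together
  have hineq2 : ∫⁻ u in Set.Ioi (0 : ℝ),
      ENNReal.ofReal |p * u ^ (p - 1)| * H ((u ^ p) ^ q) ^ p
        ≤ ENNReal.ofReal p * A ^ (p - 1) * A := by
    have hfin : ENNReal.ofReal p * A ^ (p - 1) ≠ ∞ := by
      refine ENNReal.mul_ne_top ENNReal.ofReal_ne_top ?_
      exact (ENNReal.rpow_lt_top_of_nonneg (by linarith) hAtop).ne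
    calc ∫⁻ u in Set.Ioi (0 : ℝ),
        ENNReal.ofReal |p * u ^ (p - 1)| * H ((u ^ p) ^ q) ^ p
        ≤ ∫⁻ u in Set.Ioi (0 : ℝ), ENNReal.ofReal p * A ^ (p - 1) * H u := by
          refine lintegral_mono_ae ((ae_restrict_iff' measurableSet_Ioi).2
            (Filter.Eventually.of_forall fun u hu => hbound u hu))
      _ = ENNReal.ofReal p * A ^ (p - 1) * A := by
          rw [lintegral_const_mul' (ENNReal.ofReal p * A ^ (p - 1)) H hfin, hAdef]
  have hApow : A ^ (p - 1) * A = A ^ p := by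
    rcases eq_or_ne A 0 with hA0 | hA0
    · rw [hA0, mul_zero, ENNReal.zero_rpow_of_pos hp0]
    · have h2 := ENNReal.rpow_add (x := A) (p - 1) 1 hA0 hAtop
      rw [sub_add_cancel, ENNReal.rpow_one] at h2
      exact h2.symm
  calc ∫⁻ x in Ω, (f x).abs = ∫⁻ x in Ω, G x := rfl
    _ ≤ V * ∫⁻ t in Set.Ioi (0 : ℝ), H (t ^ q) ^ p := hineq1
    _ = V * ∫⁻ u in Set.Ioi (0 : ℝ),
          ENNReal.ofReal |p * u ^ (p - 1)| * H ((u ^ p) ^ q) ^ p := by rw [hcov]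
    _ ≤ V * (ENNReal.ofReal p * A ^ (p - 1) * A) := mul_le_mul_right hineq2 V
    _ = V * ENNReal.ofReal p * (A ^ (p - 1) * A) := by ring
    _ = V * ENNReal.ofReal p * A ^ p := by rw [hApow]
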